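/- Define f : {a,b}* → ℚ by f(x) = 0.5 - 2(#a(x) - #b(x))² if x ∈ a*b*, and f(x) = -0.5 otherwise. Then the Hankel matrix H_f has rank at most 7; hence f is a rational series and is computable by a weighted finite automaton over ℚ. -/

import Mathlib

/-- The two-letter alphabet `{a, b}`. -/
inductive Sig2 : Type
  | a : Sig2
  | b : Sig2
  deriving DecidableEq

/-- A weighted finite automaton over alphabet `α` with states `Fin n`. -/
structure WFA (α : Type) where
  n : ℕ
  lam : Fin n → ℚ
  tr : Fin n → α → Fin n → ℚ
  rho : Fin n → ℚ

/-- The function computed by a WFA. -/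
def WFA.run {α : Type} (A : WFA α) (x : List α) : ℚ :=
  ∑ q : Fin A.n,
    (x.foldl (fun v σ => fun q' => ∑ p : Fin A.n, v p * A.tr p σ q') A.lam) q * A.rho q

/-- `x ∈ a*b*`: `x` consists of some `a`s followed by some `b`s. -/
def InAstarBstar (x : List Sig2) : Prop :=
  ∃ i j : ℕ, x = List.replicate i Sig2.a ++ List.replicate j Sig2.b

open Classical

/-- `f(x) = 0.5 - 2(#a(x) - #b(x))²` if `x ∈ a*b*`, and `-0.5` otherwise. -/
noncomputable def fAnbn (x : List Sig2) : ℚ :=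
  if InAstarBstar x then
    1 / 2 - 2 * (((x.count Sig2.a : ℤ) - (x.count Sig2.b : ℤ) : ℤ) : ℚ) ^ 2
  else -1 / 2

namespace S9


lemma mem_ab (i j : ℕ) : InAstarBstar (List.replicate i Sig2.a ++ List.replicate j Sig2.b) :=
  ⟨i, j, rfl⟩

lemma strip_a {v : List Sig2} (h : InAstarBstar (Sig2.a :: v)) : InAstarBstar v := by
  obtain ⟨p, q, hpq⟩ := h
  cases p with
  | zero =>
    cases q with
    | zero => simp at hpq
    | succ q => rw [List.replicate_succ] at hpq; simp at hpq
  | succ p =>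
    rw [List.replicate_succ] at hpq
    simp only [List.cons_append, List.cons.injEq, true_and] at hpq
    exact ⟨p, q, hpq⟩

lemma strip_as {v : List Sig2} (i : ℕ) (h : InAstarBstar (List.replicate i Sig2.a ++ v)) :
    InAstarBstar v := by
  induction i with
  | zero => simpa using h
  | succ i ih =>
    rw [List.replicate_succ, List.cons_append] at h
    exact ih (strip_a h)

lemma b_case {v : List Sig2} (h : InAstarBstar (Sig2.b :: v)) :
    ∃ k, v = List.replicate k Sig2.b := by
  obtain ⟨p, q, hpq⟩ := h
  cases p with
  | zero =>
    cases q with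
    | zero => simp at hpq
    | succ q =>
      rw [List.replicate_succ] at hpq
      simp only [List.replicate_zero, List.nil_append, List.cons.injEq, true_and] at hpq
      exact ⟨q, hpq⟩
  | succ p =>
    rw [List.replicate_succ] at hpq
    exact absurd (List.head_eq_of_cons_eq hpq.symm) (by simp)

lemma b_tail {i j : ℕ} {v : List Sig2}
    (h : InAstarBstar (List.replicate i Sig2.a ++ List.replicate (j+1) Sig2.b ++ v)) :
    ∃ k, v = List.replicate k Sig2.b := by
  rw [List.append_assoc] at h
  have h2 := strip_as i h
  rw [List.replicate_succ, List.cons_append] at h2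
  obtain ⟨k, hk⟩ := b_case h2
  refine ⟨k - j, ?_⟩
  have := congrArg (List.drop j) hk
  rwa [List.drop_left' (by simp), List.drop_replicate] at this

lemma pop {x : List Sig2} {σ : Sig2} (h : InAstarBstar (x ++ [σ])) : InAstarBstar x := by
  obtain ⟨p, q, hpq⟩ := h
  cases q with
  | zero =>
    simp only [List.replicate_zero, List.append_nil] at hpq
    have := congrArg (List.take x.length) hpq
    rw [List.take_left, List.take_replicate] at this
    exact ⟨_, 0, by simpa using this⟩
  | succ q =>
    rw [(List.replicate_succ' : List.replicate (q+1) Sig2.b = _), ← List.append_assoc] at hpq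
    have := List.append_inj_left' hpq rfl
    exact ⟨p, q, this⟩

lemma prefix_closed {u v : List Sig2} (h : InAstarBstar (u ++ v)) : InAstarBstar u := by
  induction v using List.reverseRecOn with
  | nil => simpa using h
  | append_singleton w σ ih =>
    rw [← List.append_assoc] at h
    exact ih (pop h)

lemma count_a (i j : ℕ) :
    (List.replicate i Sig2.a ++ List.replicate j Sig2.b).count Sig2.a = i := by
  simp [List.count_append, List.count_replicate]

lemma count_b (i j : ℕ) :
    (List.replicate i Sig2.a ++ List.replicate j Sig2.b).count Sig2.b = j := by
  simp [List.count_append, List.count_replicate]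

lemma fAnbn_ab (i j : ℕ) :
    fAnbn (List.replicate i Sig2.a ++ List.replicate j Sig2.b)
      = 1/2 - 2 * ((i : ℚ) - j)^2 := by
  rw [fAnbn, if_pos (mem_ab i j), count_a, count_b]
  push_cast
  ring

lemma fAnbn_bad {x : List Sig2} (h : ¬ InAstarBstar x) : fAnbn x = -1/2 := if_neg h




open Matrix in
@[simp] lemma cons_val_five' {α : Type*} {m : ℕ} (x : α) (u : Fin m.succ.succ.succ.succ.succ → α) :
    vecCons x u 5 = vecHead (vecTail (vecTail (vecTail (vecTail u)))) :=
  rfl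

open Matrix in
@[simp] lemma cons_val_six' {α : Type*} {m : ℕ} (x : α) (u : Fin m.succ.succ.succ.succ.succ.succ → α) :
    vecCons x u 6 = vecHead (vecTail (vecTail (vecTail (vecTail (vecTail u))))) :=
  rfl

def lamV : Fin 7 → ℚ := ![1,0,0,0,0,0,0]
def rhoV : Fin 7 → ℚ := ![1/2, 0, -2, 1/2, 0, 1, -1/2]
def MA : Fin 7 → Fin 7 → ℚ :=
  ![![1,1,1,0,0,0,0], ![0,1,2,0,0,0,0], ![0,0,1,0,0,0,0], ![0,0,0,0,0,0,1],
    ![0,0,0,0,0,0,0], ![0,0,0,0,0,0,0], ![0,0,0,0,0,0,1]]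
def MB : Fin 7 → Fin 7 → ℚ :=
  ![![0,0,0,1,-4,-2,0], ![0,0,0,0,4,4,0], ![0,0,0,0,0,-2,0], ![0,0,0,1,-4,-2,0],
    ![0,0,0,0,1,1,0], ![0,0,0,0,0,1,0], ![0,0,0,0,0,0,1]]
def trV : Fin 7 → Sig2 → Fin 7 → ℚ := fun p σ q =>
  match σ with
  | .a => MA p q
  | .b => MB p q

def A7 : WFA Sig2 := ⟨7, lamV, trV, rhoV⟩

def gv (i : ℕ) : Fin 7 → ℚ := ![1, i, (i:ℚ)^2, 0, 0, 0, 0]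
def hv (m : ℤ) : Fin 7 → ℚ := ![0, 0, 0, 1, 4*m, -2*(m:ℚ)^2, 0]
def bv : Fin 7 → ℚ := ![0, 0, 0, 0, 0, 0, 1]

def stepV (v : Fin 7 → ℚ) (σ : Sig2) : Fin 7 → ℚ := fun q' => ∑ p : Fin 7, v p * trV p σ q'

lemma step_g_a (i : ℕ) : stepV (gv i) Sig2.a = gv (i+1) := by
  funext q
  fin_cases q <;>
    simp [stepV, trV, MA, gv, Fin.sum_univ_seven, Matrix.vecHead, Matrix.vecTail] <;> push_cast <;> ring

lemma step_g_b (i : ℕ) : stepV (gv i) Sig2.b = hv ((i:ℤ) - 1) := by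
  funext q
  fin_cases q <;>
    simp [stepV, trV, MB, gv, hv, Fin.sum_univ_seven, Matrix.vecHead, Matrix.vecTail] <;> push_cast <;> ring

lemma step_h_b (m : ℤ) : stepV (hv m) Sig2.b = hv (m - 1) := by
  funext q
  fin_cases q <;>
    simp [stepV, trV, MB, hv, Fin.sum_univ_seven, Matrix.vecHead, Matrix.vecTail] <;> push_cast <;> ring

lemma step_h_a (m : ℤ) : stepV (hv m) Sig2.a = bv := by
  funext q
  fin_cases q <;>
    simp [stepV, trV, MA, hv, bv, Fin.sum_univ_seven, Matrix.vecHead, Matrix.vecTail]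

lemma step_b (σ : Sig2) : stepV bv σ = bv := by
  funext q
  cases σ <;> fin_cases q <;>
    simp [stepV, trV, MA, MB, bv, Fin.sum_univ_seven, Matrix.vecHead, Matrix.vecTail]

lemma lam_eq : lamV = gv 0 := by
  funext q; fin_cases q <;> simp [lamV, gv]

lemma foldl_char (x : List Sig2) :
    (∃ i, x = List.replicate i Sig2.a ∧ x.foldl stepV lamV = gv i)
    ∨ (∃ i j, x = List.replicate i Sig2.a ++ List.replicate (j+1) Sig2.b ∧
        x.foldl stepV lamV = hv ((i:ℤ) - (j+1)))
    ∨ (¬ InAstarBstar x ∧ x.foldl stepV lamV = bv) := by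
  induction x using List.reverseRecOn with
  | nil => exact Or.inl ⟨0, by simp, lam_eq.symm ▸ by simp⟩
  | append_singleton y σ ih =>
    rw [List.foldl_append, List.foldl_cons, List.foldl_nil]
    rcases ih with ⟨i, hy, hV⟩ | ⟨i, j, hy, hV⟩ | ⟨hy, hV⟩
    · cases σ with
      | a =>
        refine Or.inl ⟨i + 1, ?_, ?_⟩
        · rw [hy, ← List.replicate_succ']
        · rw [hV, step_g_a]
      | b =>
        refine Or.inr (Or.inl ⟨i, 0, ?_, ?_⟩)
        · rw [hy]; rfl
        · rw [hV, step_g_b]; norm_num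
    · cases σ with
      | a =>
        refine Or.inr (Or.inr ⟨?_, by rw [hV, step_h_a]⟩)
        rw [hy]
        intro h
        obtain ⟨k, hk⟩ := b_tail (by rwa [List.append_assoc] at h)
        have := congrArg (List.count Sig2.a) hk
        simp [List.count_replicate] at this
      | b =>
        refine Or.inr (Or.inl ⟨i, j + 1, ?_, ?_⟩)
        · rw [hy, List.append_assoc, ← List.replicate_succ']
        · rw [hV, step_h_b]; congr 1; push_cast; ring
    · refine Or.inr (Or.inr ⟨fun h => hy (pop h), by rw [hV, step_b]⟩)

lemma fAnbn_a (i : ℕ) : fAnbn (List.replicate i Sig2.a) = 1/2 - 2 * (i:ℚ)^2 := by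
  have := fAnbn_ab i 0
  simpa using this

lemma A7_run (x : List Sig2) :
    WFA.run A7 x = ∑ q : Fin 7, (x.foldl stepV lamV) q * rhoV q := rfl

lemma run_correct (x : List Sig2) : WFA.run A7 x = fAnbn x := by
  rw [A7_run]
  rcases foldl_char x with ⟨i, hy, hV⟩ | ⟨i, j, hy, hV⟩ | ⟨hy, hV⟩
  · rw [hV, hy, fAnbn_a]
    simp [gv, rhoV, Fin.sum_univ_seven, Matrix.vecHead, Matrix.vecTail]
    try ring
  · rw [hV, hy, fAnbn_ab]
    simp [hv, rhoV, Fin.sum_univ_seven, Matrix.vecHead, Matrix.vecTail]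
    try push_cast
    try ring
  · rw [hV, fAnbn_bad hy]
    simp [bv, rhoV, Fin.sum_univ_seven, Matrix.vecHead, Matrix.vecTail]
    try norm_num

/-! ### Generators for the row space -/

noncomputable def G1 : List Sig2 → ℚ := fun v =>
  if InAstarBstar v then
    (-4 : ℚ) * (((v.count Sig2.a : ℤ) - (v.count Sig2.b : ℤ) : ℤ) : ℚ) else 0
noncomputable def G2 : List Sig2 → ℚ := fun v => if InAstarBstar v then (-2 : ℚ) else 0
noncomputable def G3 : List Sig2 → ℚ := fun v =>
  if ∃ k, v = List.replicate k Sig2.b then 1/2 - 2 * ((v.count Sig2.b : ℚ))^2 else -1/2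
noncomputable def G4 : List Sig2 → ℚ := fun v =>
  if ∃ k, v = List.replicate k Sig2.b then ((v.count Sig2.b : ℚ)) else 0
noncomputable def G5 : List Sig2 → ℚ := fun v =>
  if ∃ k, v = List.replicate k Sig2.b then (1 : ℚ) else 0
noncomputable def G6 : List Sig2 → ℚ := fun _ => (-1/2 : ℚ)

noncomputable def G : Fin 7 → (List Sig2 → ℚ) := ![fAnbn, G1, G2, G3, G4, G5, G6]

lemma row_g (i : ℕ) :
    (fun v => fAnbn (List.replicate i Sig2.a ++ v))
      = fAnbn + (i : ℚ) • G1 + ((i : ℚ)^2) • G2 := by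
  funext v
  simp only [G1, G2, Pi.add_apply, Pi.smul_apply, smul_eq_mul]
  by_cases h : InAstarBstar v
  · obtain ⟨p, q, rfl⟩ := h
    rw [if_pos (mem_ab p q), if_pos (mem_ab p q)]
    rw [← List.append_assoc, ← List.replicate_add, fAnbn_ab, fAnbn_ab, count_a, count_b]
    push_cast
    ring
  · rw [if_neg h, if_neg h, fAnbn_bad h, fAnbn_bad (fun h2 => h (strip_as i h2))]
    ring

lemma row_h (i j : ℕ) :
    (fun v => fAnbn (List.replicate i Sig2.a ++ List.replicate (j+1) Sig2.b ++ v))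
      = G3 + (4 * ((i : ℚ) - (j+1))) • G4 + (-2 * ((i : ℚ) - (j+1))^2) • G5 := by
  funext v
  simp only [G3, G4, G5, Pi.add_apply, Pi.smul_apply, smul_eq_mul]
  by_cases h : ∃ k, v = List.replicate k Sig2.b
  · obtain ⟨k, rfl⟩ := h
    rw [if_pos ⟨k, rfl⟩, if_pos ⟨k, rfl⟩, if_pos ⟨k, rfl⟩]
    rw [List.append_assoc, ← List.replicate_add, fAnbn_ab, List.count_replicate]
    push_cast
    norm_num
    ring
  · rw [if_neg h, if_neg h, if_neg h]
    rw [fAnbn_bad (fun h2 => h (b_tail h2))]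
    ring

lemma row_bad {u : List Sig2} (h : ¬ InAstarBstar u) :
    (fun v => fAnbn (u ++ v)) = G6 := by
  funext v
  exact fAnbn_bad (fun h2 => h (prefix_closed h2))

end S9

/-- The Hankel matrix of `f` has rank at most 7 (the span of its rows has dimension
at most 7); hence `f` is a rational series, computable by a WFA over ℚ. -/
theorem stmt_9 :
    Module.rank ℚ
      (Submodule.span ℚ
        (Set.range fun u : List Sig2 => fun v : List Sig2 => fAnbn (u ++ v))) ≤ 7 ∧
    ∃ A : WFA Sig2, ∀ x : List Sig2, A.run x = fAnbn x := by
  constructor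
  · have hsub : (Set.range fun u : List Sig2 => fun v : List Sig2 => fAnbn (u ++ v))
        ⊆ ↑(Submodule.span ℚ (Set.range S9.G)) := by
      rintro w ⟨u, rfl⟩
      show (fun v : List Sig2 => fAnbn (u ++ v)) ∈ Submodule.span ℚ (Set.range S9.G)
      by_cases h : InAstarBstar u
      · obtain ⟨i, j, rfl⟩ := h
        cases j with
        | zero =>
          simp only [List.replicate_zero, List.append_nil]
          rw [S9.row_g i]
          exact Submodule.add_mem _
            (Submodule.add_mem _ (Submodule.subset_span ⟨0, rfl⟩)
              (Submodule.smul_mem _ _ (Submodule.subset_span ⟨1, rfl⟩)))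
            (Submodule.smul_mem _ _ (Submodule.subset_span ⟨2, rfl⟩))
        | succ j =>
          rw [S9.row_h i j]
          exact Submodule.add_mem _
            (Submodule.add_mem _ (Submodule.subset_span ⟨3, rfl⟩)
              (Submodule.smul_mem _ _ (Submodule.subset_span ⟨4, rfl⟩)))
            (Submodule.smul_mem _ _ (Submodule.subset_span ⟨5, rfl⟩))
      · rw [S9.row_bad h]
        exact Submodule.subset_span ⟨6, rfl⟩
    have h1 : Module.rank ℚ
        (Submodule.span ℚ
          (Set.range fun u : List Sig2 => fun v : List Sig2 => fAnbn (u ++ v)))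
        ≤ Module.rank ℚ (Submodule.span ℚ (Set.range S9.G)) :=
      Submodule.rank_mono (Submodule.span_le.mpr hsub)
    have h2 : Module.rank ℚ (Submodule.span ℚ (Set.range S9.G)) ≤ Cardinal.mk (Set.range S9.G) :=
      rank_span_le _
    have h3 : Cardinal.mk (Set.range S9.G) ≤ Cardinal.mk (Fin 7) := Cardinal.mk_range_le
    have h4 : Cardinal.mk (Fin 7) = 7 := by simp
    exact h1.trans (h2.trans (h3.trans_eq h4))
  · exact ⟨S9.A7, S9.run_correct⟩
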